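/- (Helstrom achievability.) Let ψ₀ and ψ₁ be unit vectors in ℂ^d. There exists an orthogonal projection M on ℂ^d (M Hermitian with M² = M) such that ½⟨ψ₀, (I - M)ψ₀⟩ + ½⟨ψ₁, M ψ₁⟩ = ½(1 - √(1 - |⟨ψ₀, ψ₁⟩|²)). Hence the minimum error probability for equal-prior discrimination of two pure states equals [1 - √(1 - |⟨ψ₀, ψ₁⟩|²)]/2. -/

import Mathlib

open Matrix

lemma proj_herm (d : ℕ) (v : Fin d → ℂ) :
    (vecMulVec v (star v)).IsHermitian := by
  ext i j
  simp [Matrix.IsHermitian, Matrix.conjTranspose_apply, vecMulVec_apply, mul_comm]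

lemma proj_idem (d : ℕ) (v : Fin d → ℂ) (hv : star v ⬝ᵥ v = 1) :
    vecMulVec v (star v) * vecMulVec v (star v) = vecMulVec v (star v) := by
  ext i j
  simp only [Matrix.mul_apply, vecMulVec_apply, Pi.star_apply]
  calc ∑ k, v i * star (v k) * (v k * star (v j))
      = (v i * star (v j)) * ∑ k, star (v k) * v k := by
        rw [Finset.mul_sum]; exact Finset.sum_congr rfl fun k _ => by ring
    _ = v i * star (v j) := by
        have : ∑ k, star (v k) * v k = star v ⬝ᵥ v := rfl
        rw [this, hv, mul_one]

lemma proj_mulVec (d : ℕ) (v x : Fin d → ℂ) :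
    vecMulVec v (star v) *ᵥ x = fun i => v i * (star v ⬝ᵥ x) := by
  funext i
  simp only [Matrix.mulVec, dotProduct, vecMulVec_apply, Pi.star_apply, Finset.mul_sum]
  exact Finset.sum_congr rfl fun k _ => by ring

lemma proj_expect (d : ℕ) (v x : Fin d → ℂ) :
    star x ⬝ᵥ (vecMulVec v (star v) *ᵥ x) = Complex.normSq (star v ⬝ᵥ x) := by
  rw [proj_mulVec]
  have : star x ⬝ᵥ (fun i => v i * (star v ⬝ᵥ x)) = (star x ⬝ᵥ v) * (star v ⬝ᵥ x) := by
    simp only [dotProduct, Finset.sum_mul]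
    exact Finset.sum_congr rfl fun k _ => by ring
  rw [this, star_dotProduct]
  simp [Complex.normSq_eq_conj_mul_self]

set_option maxHeartbeats 1000000 in
theorem helstrom_achievability
    (d : ℕ) (ψ₀ ψ₁ : Fin d → ℂ)
    (h0 : star ψ₀ ⬝ᵥ ψ₀ = 1) (h1 : star ψ₁ ⬝ᵥ ψ₁ = 1) :
    ∃ M : Matrix (Fin d) (Fin d) ℂ, M.IsHermitian ∧ M * M = M ∧
      (1 / 2) * (star ψ₀ ⬝ᵥ ((1 - M) *ᵥ ψ₀)).re
        + (1 / 2) * (star ψ₁ ⬝ᵥ (M *ᵥ ψ₁)).re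
      = (1 / 2) * (1 - Real.sqrt (1 - ‖star ψ₀ ⬝ᵥ ψ₁‖ ^ 2)) := by
  set c : ℂ := star ψ₀ ⬝ᵥ ψ₁ with hc
  set s : ℝ := ‖c‖ with hs
  have hs0 : 0 ≤ s := norm_nonneg c
  have hcc : (starRingEnd ℂ) c * c = (s ^ 2 : ℝ) := by
    rw [hs]
    rw [Complex.sq_norm]
    exact Complex.normSq_eq_conj_mul_self.symm
  have h10 : star ψ₁ ⬝ᵥ ψ₀ = (starRingEnd ℂ) c := by
    rw [hc, star_dotProduct]; rfl
  by_cases hlt : s < 1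
  · -- main case: explicit optimal projection
    set t : ℝ := Real.sqrt (1 - s ^ 2) with ht
    have ht2 : t ^ 2 = 1 - s ^ 2 := Real.sq_sqrt (by nlinarith)
    have htpos : 0 < t := Real.sqrt_pos.mpr (by nlinarith)
    set α : ℝ := Real.sqrt ((1 + t) / 2) with hα
    have hαpos : 0 < α := Real.sqrt_pos.mpr (by nlinarith)
    have hα2 : α ^ 2 = (1 + t) / 2 := Real.sq_sqrt (by nlinarith)
    set β : ℝ := -s / (2 * α) with hβ
    have hαβ : α * β = -s / 2 := by
      rw [hβ]; field_simp
    have h1t : (1 : ℝ) + t ≠ 0 := by positivity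
    have hβ2 : β ^ 2 = (1 - t) / 2 := by
      have h1' : β ^ 2 = s ^ 2 / (4 * α ^ 2) := by
        rw [hβ, div_pow, neg_sq, mul_pow]; norm_num
      rw [h1', hα2, show s ^ 2 = (1 - t) * (1 + t) by nlinarith]
      field_simp
      ring
    set u : ℂ := if c = 0 then 1 else (starRingEnd ℂ) c / (s : ℂ) with hu
    set w : Fin d → ℂ := ψ₁ - c • ψ₀ with hw
    set κ : ℂ := ((β / t : ℝ) : ℂ) * u with hκ
    set v : Fin d → ℂ := (α : ℂ) • ψ₀ + κ • w with hv
    clear_value c s t α β u w κ v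
    have hcc' : c * (starRingEnd ℂ) c = ((s ^ 2 : ℝ) : ℂ) := by rw [mul_comm]; exact hcc
    -- dot product facts for w
    have hw0 : star w ⬝ᵥ ψ₀ = 0 := by
      simp only [hw, star_sub, star_smul, sub_dotProduct, smul_dotProduct, h10, h0,
        smul_eq_mul, Complex.star_def]
      ring
    have hw0' : star ψ₀ ⬝ᵥ w = 0 := by
      rw [star_dotProduct, hw0, star_zero]
    have hw1 : star w ⬝ᵥ ψ₁ = ((t ^ 2 : ℝ) : ℂ) := by
      simp only [hw, star_sub, star_smul, sub_dotProduct, smul_dotProduct, h1, ← hc,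
        smul_eq_mul, Complex.star_def]
      rw [hcc, ht2]
      push_cast
      ring
    have hww : star w ⬝ᵥ w = ((t ^ 2 : ℝ) : ℂ) := by
      nth_rewrite 2 [hw]
      rw [dotProduct_sub, dotProduct_smul, hw1, hw0, smul_zero, sub_zero]
    have htC : (t : ℂ) ≠ 0 := by exact_mod_cast htpos.ne'
    have hκκ : (starRingEnd ℂ) κ * κ = (((β / t) ^ 2 : ℝ) : ℂ) := by
      by_cases hc0 : c = 0
      · simp only [hκ, hu, if_pos hc0, mul_one, Complex.conj_ofReal]
        push_cast
        ring
      · have hsr : s ≠ 0 := by rw [hs]; exact norm_ne_zero_iff.mpr hc0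
        have hsC : (s : ℂ) ≠ 0 := by exact_mod_cast hsr
        simp only [hκ, hu, if_neg hc0, _root_.map_mul, map_div₀, Complex.conj_conj,
          Complex.conj_ofReal]
        have : ((β / t : ℝ) : ℂ) * (c / (s : ℂ)) * (((β / t : ℝ) : ℂ) * ((starRingEnd ℂ) c / (s : ℂ)))
            = ((β / t : ℝ) : ℂ) ^ 2 * (c * (starRingEnd ℂ) c) / ((s : ℂ)) ^ 2 := by ring
        rw [this, hcc']
        push_cast
        field_simp
    -- expansion of star v ⬝ᵥ x
    have hdot : ∀ x : Fin d → ℂ,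
        star v ⬝ᵥ x = (α : ℂ) * (star ψ₀ ⬝ᵥ x) + (starRingEnd ℂ) κ * (star w ⬝ᵥ x) := by
      intro x
      simp only [hv, star_add, star_smul, add_dotProduct, smul_dotProduct, smul_eq_mul,
        Complex.star_def, Complex.conj_ofReal]
    have hp : star v ⬝ᵥ ψ₀ = (α : ℂ) := by
      rw [hdot ψ₀, h0, hw0, mul_one, mul_zero, add_zero]
    have hq : star v ⬝ᵥ ψ₁ = (α : ℂ) * c + (starRingEnd ℂ) κ * ((t ^ 2 : ℝ) : ℂ) := by
      rw [hdot ψ₁, ← hc, hw1]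
    have hvw : star v ⬝ᵥ w = (starRingEnd ℂ) κ * ((t ^ 2 : ℝ) : ℂ) := by
      rw [hdot w, hw0', hww, mul_zero, zero_add]
    have hvv : star v ⬝ᵥ v = 1 := by
      nth_rewrite 2 [hv]
      rw [dotProduct_add, dotProduct_smul, dotProduct_smul, hp, hvw, smul_eq_mul,
        smul_eq_mul, ← mul_assoc, mul_comm κ, hκκ]
      have hbt : ((((β / t) ^ 2 : ℝ) : ℂ)) * ((t ^ 2 : ℝ) : ℂ) = ((β ^ 2 : ℝ) : ℂ) := by
        push_cast
        field_simp
      rw [hbt]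
      norm_cast
      nlinarith [hα2, hβ2]
    -- normSq of q
    have hnq : Complex.normSq (star v ⬝ᵥ ψ₁) = (1 - t) / 2 := by
      rw [hq]
      by_cases hc0 : c = 0
      · have hs' : s = 0 := by rw [hs, hc0]; simp
        have hβ0 : β = 0 := by rw [hβ, hs']; simp
        simp only [hc0, mul_zero, zero_add, hκ, hβ0, _root_.map_mul, Complex.conj_ofReal]
        have : t = 1 := by
          rw [ht, hs']; simp
        rw [this]
        norm_num
      · have hsr : s ≠ 0 := by rw [hs]; exact norm_ne_zero_iff.mpr hc0
        have hsC : (s : ℂ) ≠ 0 := by exact_mod_cast hsr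
        have hκ' : (starRingEnd ℂ) κ = ((β / t : ℝ) : ℂ) * (c / (s : ℂ)) := by
          rw [hκ, _root_.map_mul, Complex.conj_ofReal, hu, if_neg hc0, map_div₀,
            Complex.conj_conj, Complex.conj_ofReal]
        rw [hκ']
        have : (α : ℂ) * c + ((β / t : ℝ) : ℂ) * (c / (s : ℂ)) * ((t ^ 2 : ℝ) : ℂ)
            = (((α * s + β * t) / s : ℝ) : ℂ) * c := by
          push_cast
          field_simp
        rw [this, Complex.normSq_mul, Complex.normSq_ofReal, Complex.normSq_eq_norm_sq, ← hs]
        have hx : (α * s + β * t) / s * ((α * s + β * t) / s) * s ^ 2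
            = (α * s + β * t) ^ 2 := by
          field_simp
        rw [hx]
        linear_combination s ^ 2 * hα2 + t ^ 2 * hβ2 + 2 * s * t * hαβ + (1 - t) / 2 * ht2
    -- assemble
    refine ⟨vecMulVec v (star v), proj_herm d v, proj_idem d v hvv, ?_⟩
    have e0 : star ψ₀ ⬝ᵥ ((1 - vecMulVec v (star v)) *ᵥ ψ₀)
        = 1 - ((Complex.normSq (star v ⬝ᵥ ψ₀) : ℝ) : ℂ) := by
      rw [sub_mulVec, one_mulVec, dotProduct_sub, h0, proj_expect]
    rw [e0, proj_expect]
    rw [hp]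
    simp only [Complex.normSq_ofReal]
    rw [hnq]
    have : ((1 : ℂ) - ((α * α : ℝ) : ℂ)).re = 1 - α * α := by
      simp [Complex.sub_re, Complex.ofReal_re]
    rw [this]
    rw [show ((((1 - t) / 2 : ℝ) : ℂ)).re = (1 - t) / 2 by simp]
    nlinarith [hα2]
  · -- degenerate case s ≥ 1 : M = 0 works
    refine ⟨0, by simp [Matrix.IsHermitian], by simp, ?_⟩
    have hsq : Real.sqrt (1 - s ^ 2) = 0 := by
      apply Real.sqrt_eq_zero_of_nonpos
      nlinarith [not_lt.mp hlt]
    rw [hsq]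
    simp [h0]
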